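/- Under the hypotheses of Section 1, for every λ_0 ∈ D and every 0 < r < 1, the holonomy map H_{λ_0} : 𝒢 → (𝒢)_{λ_0}, defined by H_{λ_0}(λ, ω(λ)) = (λ_0, ω(λ_0)), is well defined and (a/A)-Hölder continuous on 𝒢 ∩ (D_r × B): there is a constant C' > 0 with ‖ω(λ_0) − ω'(λ_0)‖ ≤ C' ‖(λ, ω(λ)) − (λ', ω'(λ'))‖^{a/A} for all ω, ω' ∈ {1,…,m}^ℕ and λ, λ' ∈ D_r. -/

import Mathlib

open Metric Set Real

set_option maxHeartbeats 1000000

namespace Stmt8Aux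

variable {k m : ℕ} {a A : ℝ}
variable {c : EuclideanSpace ℂ (Fin k)} {R : ℝ}
variable {G : Fin m → ℂ × EuclideanSpace ℂ (Fin k) → ℂ × EuclideanSpace ℂ (Fin k)}
variable {ω : ℕ → Fin m}
variable {comp : ℕ → ℂ × EuclideanSpace ℂ (Fin k) → ℂ × EuclideanSpace ℂ (Fin k)}

theorem compFst (hfiber : ∀ j (lam : ℂ) z, (G j (lam, z)).1 = lam)
    (h0 : comp 0 = G (ω 0)) (hrec : ∀ p, comp (p + 1) = comp p ∘ G (ω (p + 1))) :
    ∀ p x, (comp p x).1 = x.1 := by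
  intro p
  induction p with
  | zero => intro x; rw [h0]; exact hfiber (ω 0) x.1 x.2
  | succ p ih =>
    intro x
    rw [hrec p]
    exact (ih _).trans (hfiber (ω (p+1)) x.1 x.2)

theorem compImage
    (hmaps : ∀ j, G j '' (closure (ball (0:ℂ) 1) ×ˢ closure (ball c R)) ⊆
      closure (ball (0:ℂ) 1) ×ˢ ball c R)
    (h0 : comp 0 = G (ω 0)) (hrec : ∀ p, comp (p + 1) = comp p ∘ G (ω (p + 1))) :
    ∀ p, comp p '' (closure (ball (0:ℂ) 1) ×ˢ closure (ball c R)) ⊆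
      closure (ball (0:ℂ) 1) ×ˢ ball c R := by
  intro p
  induction p with
  | zero => rw [h0]; exact hmaps (ω 0)
  | succ p ih =>
    rw [hrec p, Set.image_comp]
    refine (Set.image_mono ?_).trans ih
    refine (hmaps (ω (p+1))).trans ?_
    exact Set.prod_mono subset_rfl subset_closure

theorem compContr
    (hfiber : ∀ j (lam : ℂ) z, (G j (lam, z)).1 = lam)
    (hmaps : ∀ j, G j '' (closure (ball (0:ℂ) 1) ×ˢ closure (ball c R)) ⊆
      closure (ball (0:ℂ) 1) ×ˢ ball c R)
    (hcontr : ∀ j, ∀ lam ∈ closure (ball (0:ℂ) 1), ∀ z ∈ closure (ball c R),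
      ∀ z' ∈ closure (ball c R),
      exp (-A) * ‖z - z'‖ ≤ ‖(G j (lam, z)).2 - (G j (lam, z')).2‖ ∧
      ‖(G j (lam, z)).2 - (G j (lam, z')).2‖ ≤ exp (-a) * ‖z - z'‖)
    (h0 : comp 0 = G (ω 0)) (hrec : ∀ p, comp (p + 1) = comp p ∘ G (ω (p + 1))) :
    ∀ p, ∀ lam ∈ closure (ball (0:ℂ) 1), ∀ z ∈ closure (ball c R),
      ∀ z' ∈ closure (ball c R),
      exp (-A) ^ (p+1) * ‖z - z'‖ ≤ ‖(comp p (lam, z)).2 - (comp p (lam, z')).2‖ ∧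
      ‖(comp p (lam, z)).2 - (comp p (lam, z')).2‖ ≤ exp (-a) ^ (p+1) * ‖z - z'‖ := by
  intro p
  induction p with
  | zero =>
    intro lam hlam z hz z' hz'
    rw [h0]
    simpa [pow_one] using hcontr (ω 0) lam hlam z hz z' hz'
  | succ p ih =>
    intro lam hlam z hz z' hz'
    have hGmem : ∀ ζ, ζ ∈ closure (ball c R) →
        G (ω (p+1)) (lam, ζ) = (lam, (G (ω (p+1)) (lam, ζ)).2) ∧
        (G (ω (p+1)) (lam, ζ)).2 ∈ closure (ball c R) := by
      intro ζ hζ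
      constructor
      · exact Prod.ext (hfiber _ lam ζ) rfl
      · exact subset_closure
          (hmaps (ω (p+1)) (Set.mem_image_of_mem _ (Set.mk_mem_prod hlam hζ))).2
    obtain ⟨hGz, huz⟩ := hGmem z hz
    obtain ⟨hGz', huz'⟩ := hGmem z' hz'
    set u := (G (ω (p+1)) (lam, z)).2 with hu
    set u' := (G (ω (p+1)) (lam, z')).2 with hu'
    have hcomp_z : comp (p+1) (lam, z) = comp p (lam, u) := by
      rw [hrec p]; simp only [Function.comp_apply]; rw [hGz]
    have hcomp_z' : comp (p+1) (lam, z') = comp p (lam, u') := by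
      rw [hrec p]; simp only [Function.comp_apply]; rw [hGz']
    have hstep := hcontr (ω (p+1)) lam hlam z hz z' hz'
    have IH := ih lam hlam u huz u' huz'
    rw [hcomp_z, hcomp_z']
    have hA0 : (0:ℝ) < exp (-A) ^ (p+1) := pow_pos (exp_pos _) _
    have ha0 : (0:ℝ) < exp (-a) ^ (p+1) := pow_pos (exp_pos _) _
    constructor
    · calc exp (-A) ^ (p+1+1) * ‖z - z'‖ = exp (-A) ^ (p+1) * (exp (-A) * ‖z - z'‖) := by ring
        _ ≤ exp (-A) ^ (p+1) * ‖u - u'‖ := by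
            exact mul_le_mul_of_nonneg_left hstep.1 hA0.le
        _ ≤ _ := IH.1
    · calc ‖(comp p (lam, u)).2 - (comp p (lam, u')).2‖ ≤ exp (-a) ^ (p+1) * ‖u - u'‖ := IH.2
        _ ≤ exp (-a) ^ (p+1) * (exp (-a) * ‖z - z'‖) := by
            exact mul_le_mul_of_nonneg_left hstep.2 ha0.le
        _ = exp (-a) ^ (p+1+1) * ‖z - z'‖ := by ring

theorem compDiff
    (hol : ∀ j, ∃ U : Set (ℂ × EuclideanSpace ℂ (Fin k)), IsOpen U ∧
      closure (ball (0:ℂ) 1) ×ˢ closure (ball c R) ⊆ U ∧ DifferentiableOn ℂ (G j) U)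
    (hmaps : ∀ j, G j '' (closure (ball (0:ℂ) 1) ×ˢ closure (ball c R)) ⊆
      closure (ball (0:ℂ) 1) ×ˢ ball c R)
    (h0 : comp 0 = G (ω 0)) (hrec : ∀ p, comp (p + 1) = comp p ∘ G (ω (p + 1))) :
    ∀ p, ∀ x ∈ closure (ball (0:ℂ) 1) ×ˢ closure (ball c R),
      DifferentiableAt ℂ (comp p) x := by
  have hGdiff : ∀ j, ∀ x ∈ closure (ball (0:ℂ) 1) ×ˢ closure (ball c R),
      DifferentiableAt ℂ (G j) x := by
    intro j x hx
    obtain ⟨U, hUopen, hUsub, hUdiff⟩ := hol j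
    exact hUdiff.differentiableAt (hUopen.mem_nhds (hUsub hx))
  intro p
  induction p with
  | zero => intro x hx; rw [h0]; exact hGdiff (ω 0) x hx
  | succ p ih =>
    intro x hx
    rw [hrec p]
    have hmem : G (ω (p+1)) x ∈ closure (ball (0:ℂ) 1) ×ˢ closure (ball c R) := by
      have := hmaps (ω (p+1)) (Set.mem_image_of_mem _ hx)
      exact ⟨this.1, subset_closure this.2⟩
    exact (ih _ hmem).comp x (hGdiff (ω (p+1)) x hx)

theorem compLip
    (hR : 0 < R)
    (hol : ∀ j, ∃ U : Set (ℂ × EuclideanSpace ℂ (Fin k)), IsOpen U ∧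
      closure (ball (0:ℂ) 1) ×ˢ closure (ball c R) ⊆ U ∧ DifferentiableOn ℂ (G j) U)
    (hmaps : ∀ j, G j '' (closure (ball (0:ℂ) 1) ×ˢ closure (ball c R)) ⊆
      closure (ball (0:ℂ) 1) ×ˢ ball c R)
    (h0 : comp 0 = G (ω 0)) (hrec : ∀ p, comp (p + 1) = comp p ∘ G (ω (p + 1)))
    {r : ℝ} (hr0 : 0 < r) (hr1 : r < 1)
    (p : ℕ) {ζ : EuclideanSpace ℂ (Fin k)} (hζ : ζ ∈ closure (ball c R))
    {lam lam' : ℂ} (hlam : lam ∈ ball (0:ℂ) r) (hlam' : lam' ∈ ball (0:ℂ) r) :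
    ‖(comp p (lam, ζ)).2 - (comp p (lam', ζ)).2‖ ≤ (2 * R / (1 - r)) * ‖lam - lam'‖ := by
  set f : ℂ → EuclideanSpace ℂ (Fin k) := fun lam => (comp p (lam, ζ)).2 with hf
  have hdiff : ∀ μ ∈ ball (0:ℂ) 1, DifferentiableAt ℂ f μ := by
    intro μ hμ
    have hmem : ((μ, ζ) : ℂ × EuclideanSpace ℂ (Fin k)) ∈
        closure (ball (0:ℂ) 1) ×ˢ closure (ball c R) :=
      Set.mk_mem_prod (subset_closure hμ) hζ
    have h1 : DifferentiableAt ℂ (fun μ : ℂ => comp p (μ, ζ)) μ :=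
      (compDiff hol hmaps h0 hrec p _ hmem).comp μ
        (differentiableAt_id.prodMk (differentiableAt_const _))
    exact h1.snd
  have hmapsf : ∀ μ ∈ ball (0:ℂ) 1, f μ ∈ ball c R := by
    intro μ hμ
    exact (compImage hmaps h0 hrec p
      (Set.mem_image_of_mem _ (Set.mk_mem_prod (subset_closure hμ) hζ))).2
  have hbound : ∀ μ ∈ ball (0:ℂ) r, ‖deriv f μ‖ ≤ 2 * R / (1 - r) := by
    intro μ hμ
    have hsub : ball μ (1 - r) ⊆ ball (0:ℂ) 1 := by
      apply ball_subset_ball'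
      have : dist μ 0 < r := mem_ball.mp hμ
      linarith
    have hd : DifferentiableOn ℂ f (ball μ (1 - r)) := fun x hx =>
      (hdiff x (hsub hx)).differentiableWithinAt
    have hm : Set.MapsTo f (ball μ (1 - r)) (ball (f μ) (2 * R)) := by
      intro x hx
      have h1 : dist (f x) c < R := mem_ball.mp (hmapsf x (hsub hx))
      have h2 : dist (f μ) c < R := mem_ball.mp (hmapsf μ (hsub (mem_ball_self (by linarith))))
      have h3 : dist (f x) (f μ) ≤ dist (f x) c + dist c (f μ) := dist_triangle _ _ _
      rw [dist_comm c (f μ)] at h3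
      exact mem_ball.mpr (by linarith)
    exact Complex.norm_deriv_le_div_of_mapsTo_ball hd (hm.mono_right ball_subset_closedBall) (by linarith)
  exact (convex_ball (0:ℂ) r).norm_image_sub_le_of_norm_deriv_le
    (fun x hx => hdiff x (ball_subset_ball hr1.le hx)) hbound hlam' hlam

theorem compEqAgree {ω' : ℕ → Fin m}
    {comp' : ℕ → ℂ × EuclideanSpace ℂ (Fin k) → ℂ × EuclideanSpace ℂ (Fin k)}
    (h0 : comp 0 = G (ω 0)) (hrec : ∀ p, comp (p + 1) = comp p ∘ G (ω (p + 1)))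
    (h0' : comp' 0 = G (ω' 0)) (hrec' : ∀ p, comp' (p + 1) = comp' p ∘ G (ω' (p + 1))) :
    ∀ p, (∀ q ≤ p, ω q = ω' q) → comp p = comp' p := by
  intro p
  induction p with
  | zero => intro hyp; rw [h0, h0', hyp 0 le_rfl]
  | succ p ih =>
    intro hyp
    rw [hrec p, hrec' p, ih (fun q hq => hyp q (hq.trans p.le_succ)), hyp (p+1) le_rfl]

end Stmt8Aux

open Stmt8Aux in
/-- the holonomy map H_{lam₀} on the family of limit graphs is
(a/A)-Hölder on 𝒢 ∩ (D_r × B). -/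
theorem stmt_8 {k m : ℕ}
    (a A : ℝ) (ha : 0 < a) (haA : a ≤ A)
    (c : EuclideanSpace ℂ (Fin k)) (R : ℝ) (hR : 0 < R)
    (G : Fin m → ℂ × EuclideanSpace ℂ (Fin k) → ℂ × EuclideanSpace ℂ (Fin k))
    (hol : ∀ j, ∃ U : Set (ℂ × EuclideanSpace ℂ (Fin k)), IsOpen U ∧
      closure (ball (0:ℂ) 1) ×ˢ closure (ball c R) ⊆ U ∧ DifferentiableOn ℂ (G j) U)
    (hfiber : ∀ j (lam : ℂ) z, (G j (lam, z)).1 = lam)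
    (hmaps : ∀ j, G j '' (closure (ball (0:ℂ) 1) ×ˢ closure (ball c R)) ⊆
      closure (ball (0:ℂ) 1) ×ˢ ball c R)
    (hcontr : ∀ j, ∀ lam ∈ closure (ball (0:ℂ) 1), ∀ z ∈ closure (ball c R),
      ∀ z' ∈ closure (ball c R),
      exp (-A) * ‖z - z'‖ ≤ ‖(G j (lam, z)).2 - (G j (lam, z')).2‖ ∧
      ‖(G j (lam, z)).2 - (G j (lam, z')).2‖ ≤ exp (-a) * ‖z - z'‖)
    (d : ℝ) (hd : 0 < d)
    (hsep : ∀ j j', j ≠ j' →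
      ∀ x ∈ G j '' (closure (ball (0:ℂ) 1) ×ˢ closure (ball c R)),
      ∀ y ∈ G j' '' (closure (ball (0:ℂ) 1) ×ˢ closure (ball c R)), d ≤ dist x y) :
    ∀ lam₀ ∈ ball (0:ℂ) 1, ∀ r : ℝ, 0 < r → r < 1 → ∃ C' > (0:ℝ),
      ∀ (ω ω' : ℕ → Fin m)
        (comp comp' : ℕ → ℂ × EuclideanSpace ℂ (Fin k) → ℂ × EuclideanSpace ℂ (Fin k)),
        comp 0 = G (ω 0) → (∀ p, comp (p + 1) = comp p ∘ G (ω (p + 1))) →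
        comp' 0 = G (ω' 0) → (∀ p, comp' (p + 1) = comp' p ∘ G (ω' (p + 1))) →
        ∀ lam ∈ ball (0:ℂ) r, ∀ lam' ∈ ball (0:ℂ) r,
        ∀ w w' w₀ w₀' : EuclideanSpace ℂ (Fin k),
        (∀ p : ℕ, (lam, w) ∈ comp p '' (closure (ball (0:ℂ) 1) ×ˢ closure (ball c R))) →
        (∀ p : ℕ, (lam₀, w₀) ∈ comp p '' (closure (ball (0:ℂ) 1) ×ˢ closure (ball c R))) →
        (∀ p : ℕ, (lam', w') ∈ comp' p '' (closure (ball (0:ℂ) 1) ×ˢ closure (ball c R))) →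
        (∀ p : ℕ, (lam₀, w₀') ∈ comp' p '' (closure (ball (0:ℂ) 1) ×ˢ closure (ball c R))) →
        ‖w₀ - w₀'‖ ≤ C' * ‖((lam, w) : ℂ × EuclideanSpace ℂ (Fin k)) - (lam', w')‖ ^ (a / A) := by
  intro lam₀ hlam₀ r hr0 hr1
  have hA : 0 < A := lt_of_lt_of_le ha haA
  have hAne : A ≠ 0 := hA.ne'
  have h1r : 0 < 1 - r := by linarith
  set L : ℝ := 2 * R / (1 - r) with hLdef
  have hL : 0 < L := div_pos (by linarith) h1r
  set C₁ : ℝ := d / (2 * (L + 1)) with hC₁def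
  have hC₁ : 0 < C₁ := div_pos hd (by linarith)
  have hCd : C₁ * (2 * (L + 1)) = d := by rw [hC₁def]; field_simp
  have hC' : (0:ℝ) < 2 * R / C₁ ^ (a / A) :=
    div_pos (by linarith) (Real.rpow_pos_of_pos hC₁ _)
  refine ⟨2 * R / C₁ ^ (a / A), hC', ?_⟩
  intro ω ω' comp comp' h0 hrec h0' hrec' lam hlam lam' hlam' w w' w₀ w₀' h1 h2 h3 h4
  set δ := ‖((lam, w) : ℂ × EuclideanSpace ℂ (Fin k)) - (lam', w')‖ with hδdef
  have hδ : δ = max ‖lam - lam'‖ ‖w - w'‖ := rfl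
  have hδ0 : (0:ℝ) ≤ δ := norm_nonneg _
  have hrpos : (0:ℝ) ≤ 2 * R / C₁ ^ (a / A) * δ ^ (a / A) :=
    mul_nonneg hC'.le (Real.rpow_nonneg hδ0 _)
  have hlam0D : lam₀ ∈ closure (ball (0:ℂ) 1) := subset_closure hlam₀
  have hlamD : lam ∈ closure (ball (0:ℂ) 1) := subset_closure (ball_subset_ball hr1.le hlam)
  have hdiam : ∀ z ∈ closure (ball c R), ∀ z' ∈ closure (ball c R), ‖z - z'‖ ≤ 2 * R := by
    intro z hz z' hz'
    have hz2 := mem_closedBall.mp (closure_ball_subset_closedBall hz)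
    have hz2' := mem_closedBall.mp (closure_ball_subset_closedBall hz')
    calc ‖z - z'‖ = dist z z' := (dist_eq_norm _ _).symm
      _ ≤ dist z c + dist c z' := dist_triangle _ _ _
      _ ≤ 2 * R := by rw [dist_comm c z']; linarith
  -- upper bound for `w₀, w₀'` whenever the compositions agree at level `p`
  have hup : ∀ p, comp p = comp' p → ‖w₀ - w₀'‖ ≤ 2 * R * exp (-a) ^ (p + 1) := by
    intro p hpp
    obtain ⟨⟨μ, ζ⟩, hmem, heq⟩ := h2 p
    obtain ⟨⟨μ', ζ'⟩, hmem', heq'⟩ := h4 p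
    rw [← hpp] at heq'
    have hμ : μ = lam₀ := by
      have h := compFst hfiber h0 hrec p (μ, ζ); rw [heq] at h; exact h.symm
    have hμ' : μ' = lam₀ := by
      have h := compFst hfiber h0 hrec p (μ', ζ'); rw [heq'] at h; exact h.symm
    rw [hμ] at heq
    rw [hμ'] at heq'
    have e1 : (comp p (lam₀, ζ)).2 = w₀ := congrArg Prod.snd heq
    have e2 : (comp p (lam₀, ζ')).2 = w₀' := congrArg Prod.snd heq'
    have hcc := (compContr hfiber hmaps hcontr h0 hrec p lam₀ hlam0D ζ hmem.2 ζ' hmem'.2).2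
    rw [e1, e2] at hcc
    calc ‖w₀ - w₀'‖ ≤ exp (-a) ^ (p + 1) * ‖ζ - ζ'‖ := hcc
      _ ≤ exp (-a) ^ (p + 1) * (2 * R) :=
          mul_le_mul_of_nonneg_left (hdiam ζ hmem.2 ζ' hmem'.2) (pow_pos (exp_pos _) _).le
      _ = 2 * R * exp (-a) ^ (p + 1) := by ring
  by_cases hcase : ∀ p, ω p = ω' p
  · -- identical itineraries: w₀ = w₀'
    have hcc : ∀ p, comp p = comp' p := fun p =>
      compEqAgree h0 hrec h0' hrec' p (fun q _ => hcase q)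
    have hzero : ‖w₀ - w₀'‖ ≤ 0 := by
      have hlt1 : exp (-a) < 1 := by
        rw [Real.exp_lt_one_iff]; linarith
      have h1 : Filter.Tendsto (fun p : ℕ => exp (-a) ^ (p + 1)) Filter.atTop (nhds 0) :=
        (tendsto_pow_atTop_nhds_zero_of_lt_one (exp_pos _).le hlt1).comp
          (Filter.tendsto_add_atTop_nat 1)
      have h2' : Filter.Tendsto (fun p : ℕ => 2 * R * exp (-a) ^ (p + 1)) Filter.atTop
          (nhds 0) := by simpa using h1.const_mul (2 * R)
      exact ge_of_tendsto' h2' (fun p => hup p (hcc p))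
    calc ‖w₀ - w₀'‖ ≤ 0 := hzero
      _ ≤ _ := hrpos
  · push_neg at hcase
    obtain ⟨p, hne, hagree⟩ : ∃ p, ω p ≠ ω' p ∧ ∀ q < p, ω q = ω' q :=
      ⟨Nat.find hcase, Nat.find_spec hcase,
        fun q hq => of_not_not (Nat.find_min hcase hq)⟩
    -- lower bound: separation estimate
    have hlow : C₁ * exp (-A) ^ p ≤ δ := by
      cases p with
      | zero =>
        have hx : (lam, w) ∈ G (ω 0) '' (closure (ball (0:ℂ) 1) ×ˢ closure (ball c R)) := by
          rw [← h0]; exact h1 0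
        have hy : (lam', w') ∈ G (ω' 0) '' (closure (ball (0:ℂ) 1) ×ˢ closure (ball c R)) := by
          rw [← h0']; exact h3 0
        have hdd := hsep _ _ hne _ hx _ hy
        rw [dist_eq_norm] at hdd
        have hC₁d : C₁ ≤ d := by nlinarith
        rw [pow_zero, mul_one]; exact hC₁d.trans hdd
      | succ q =>
        obtain ⟨⟨μ, ζ⟩, hmem, heq⟩ := h1 (q + 1)
        have hμ : μ = lam := by
          have h := compFst hfiber h0 hrec (q + 1) (μ, ζ); rw [heq] at h; exact h.symm
        rw [hμ] at heq hmem
        obtain ⟨⟨μ', ζ'⟩, hmem', heq'⟩ := h3 (q + 1)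
        have hμ' : μ' = lam' := by
          have h := compFst hfiber h0' hrec' (q + 1) (μ', ζ'); rw [heq'] at h; exact h.symm
        rw [hμ'] at heq' hmem'
        rw [hrec q] at heq
        rw [hrec' q] at heq'
        set u := (G (ω (q + 1)) (lam, ζ)).2 with hu
        set u' := (G (ω' (q + 1)) (lam', ζ')).2 with hu'
        have hGu : G (ω (q + 1)) (lam, ζ) = (lam, u) := Prod.ext (hfiber _ _ _) rfl
        have hGu' : G (ω' (q + 1)) (lam', ζ') = (lam', u') := Prod.ext (hfiber _ _ _) rfl
        have huimg : (lam, u) ∈ G (ω (q + 1)) ''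
            (closure (ball (0:ℂ) 1) ×ˢ closure (ball c R)) :=
          by rw [← hGu]; exact Set.mem_image_of_mem _ hmem
        have hu'img : (lam', u') ∈ G (ω' (q + 1)) ''
            (closure (ball (0:ℂ) 1) ×ˢ closure (ball c R)) :=
          by rw [← hGu']; exact Set.mem_image_of_mem _ hmem'
        have huB : u ∈ closure (ball c R) :=
          subset_closure (hmaps _ (Set.mem_image_of_mem _ hmem)).2
        have hu'B : u' ∈ closure (ball c R) :=
          subset_closure (hmaps _ (Set.mem_image_of_mem _ hmem')).2
        have hw : (comp q (lam, u)).2 = w := by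
          rw [← hGu]; exact congrArg Prod.snd heq
        have hccq : comp q = comp' q :=
          compEqAgree h0 hrec h0' hrec' q (fun i hi => hagree i (Nat.lt_succ_of_le hi))
        have hw' : (comp q (lam', u')).2 = w' := by
          rw [hccq, ← hGu']; exact congrArg Prod.snd heq'
        have hdd := hsep _ _ hne _ huimg _ hu'img
        rw [Prod.dist_eq] at hdd
        simp only [dist_eq_norm] at hdd
        have hA1 := (compContr hfiber hmaps hcontr h0 hrec q lam hlamD u huB u' hu'B).1
        have hA2 := compLip hR hol hmaps h0 hrec hr0 hr1 q hu'B hlam hlam'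
        have htri : ‖(comp q (lam, u)).2 - (comp q (lam, u')).2‖ ≤
            ‖(comp q (lam, u)).2 - (comp q (lam', u')).2‖ +
            ‖(comp q (lam', u')).2 - (comp q (lam, u')).2‖ := by
          have := dist_triangle ((comp q (lam, u)).2) ((comp q (lam', u')).2)
            ((comp q (lam, u')).2)
          simpa [dist_eq_norm] using this
        have hbc : ‖(comp q (lam', u')).2 - (comp q (lam, u')).2‖ ≤ L * ‖lam - lam'‖ := by
          rw [norm_sub_rev]; exact hA2
        have hwb : exp (-A) ^ (q + 1) * ‖u - u'‖ - L * ‖lam - lam'‖ ≤ ‖w - w'‖ := by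
          rw [← hw, ← hw']; linarith
        have hδmax : ‖lam - lam'‖ ≤ δ := hδ ▸ le_max_left _ _
        have hδmax2 : ‖w - w'‖ ≤ δ := hδ ▸ le_max_right _ _
        have hE : (0:ℝ) < exp (-A) ^ (q + 1) := pow_pos (exp_pos _) _
        have hE1 : exp (-A) ^ (q + 1) ≤ 1 :=
          pow_le_one₀ (exp_pos _).le (Real.exp_le_one_iff.mpr (by linarith))
        rcases le_or_gt (C₁ * exp (-A) ^ (q + 1)) ‖lam - lam'‖ with hc2 | hc2
        · exact hc2.trans hδmax
        · have htd : ‖lam - lam'‖ < d := hc2.trans_le (by nlinarith)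
          have hud : d ≤ ‖u - u'‖ := by
            rcases le_max_iff.mp hdd with h | h
            · exact absurd htd (not_lt.mpr h)
            · exact h
          have hfin : C₁ * exp (-A) ^ (q + 1) ≤ ‖w - w'‖ := by
            nlinarith [mul_nonneg hE.le (sub_nonneg.mpr hud),
              mul_pos hL (sub_pos.mpr hc2),
              mul_nonneg (mul_nonneg hE.le (by linarith : (0:ℝ) ≤ L + 1)) hC₁.le]
          exact hfin.trans hδmax2
    -- upper bound at the splitting level
    have hupper : ‖w₀ - w₀'‖ ≤ 2 * R * exp (-a) ^ p := by
      cases p with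
      | zero =>
        have hb0 : w₀ ∈ ball c R := (compImage hmaps h0 hrec 0 (h2 0)).2
        have hb0' : w₀' ∈ ball c R := (compImage hmaps h0' hrec' 0 (h4 0)).2
        have := hdiam w₀ (subset_closure hb0) w₀' (subset_closure hb0')
        simpa [pow_zero] using this
      | succ q =>
        exact hup q (compEqAgree h0 hrec h0' hrec' q
          (fun i hi => hagree i (Nat.lt_succ_of_le hi)))
    have hEle : exp (-A) ^ p ≤ δ / C₁ := by
      rw [le_div_iff₀ hC₁]
      nlinarith [hlow]
    have hkey : exp (-a) ^ p = (exp (-A) ^ p) ^ (a / A) := by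
      rw [← Real.exp_nat_mul, ← Real.exp_nat_mul, ← Real.exp_mul]
      congr 1
      field_simp
    calc ‖w₀ - w₀'‖ ≤ 2 * R * exp (-a) ^ p := hupper
      _ = 2 * R * (exp (-A) ^ p) ^ (a / A) := by rw [hkey]
      _ ≤ 2 * R * (δ / C₁) ^ (a / A) := by
          refine mul_le_mul_of_nonneg_left ?_ (by linarith)
          exact Real.rpow_le_rpow (pow_nonneg (exp_pos _).le _) hEle
            (div_nonneg ha.le hA.le)
      _ = 2 * R / C₁ ^ (a / A) * δ ^ (a / A) := by
          rw [Real.div_rpow hδ0 hC₁.le]; ring
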